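/- For every q with 1 < q ≤ 2 and all x, y ∈ [0,1] with x + y ≤ 1, one has h_q(x+y)² ≥ h_q(x)² + h_q(y)², where h_q(t) = (1 - ((1+√(1-t))/2)^q - ((1-√(1-t))/2)^q)^{1/q}. -/

import Mathlib

noncomputable def h (q t : ℝ) : ℝ :=
  (1 - ((1 + Real.sqrt (1 - t)) / 2) ^ q - ((1 - Real.sqrt (1 - t)) / 2) ^ q) ^ (1 / q)

open Real Set

lemma contPow2 (q : ℝ) (hq : 0 ≤ q) : Continuous (fun z : ℝ => z ^ q) := by
  rw [continuous_iff_continuousAt]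
  exact fun z => Real.continuousAt_rpow_const z q (Or.inr hq)

lemma key_s {q : ℝ} (hq1 : 1 < q) (hq2 : q ≤ 2) {s : ℝ} (hs0 : 0 ≤ s) (hs1 : s ≤ 1) :
    s ≤ ((1 + s) / 2) ^ q - ((1 - s) / 2) ^ q := by
  set φ : ℝ → ℝ := fun u => ((1 + u) / 2) ^ q - ((1 - u) / 2) ^ q with hφ
  have hcont : Continuous φ := by
    apply Continuous.sub
    · exact (contPow2 q (by linarith)).comp ((continuous_const.add continuous_id).div_const 2)
    · exact (contPow2 q (by linarith)).comp ((continuous_const.sub continuous_id).div_const 2)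
  set φ' : ℝ → ℝ := fun u =>
    1 / 2 * q * ((1 + u) / 2) ^ (q - 1) + 1 / 2 * q * ((1 - u) / 2) ^ (q - 1) with hφ'
  have hconc : ConcaveOn ℝ (Icc (0:ℝ) 1) φ := by
    apply concaveOn_of_hasDerivWithinAt2_nonpos (convex_Icc 0 1) hcont.continuousOn
      (f' := φ') (f'' := fun u =>
        1 / 2 * q * (1 / 2 * (q - 1) * ((1 + u) / 2) ^ (q - 2))
          - 1 / 2 * q * (1 / 2 * (q - 1) * ((1 - u) / 2) ^ (q - 2)))
    · intro u hu
      rw [interior_Icc] at hu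
      have hA : HasDerivAt (fun v : ℝ => (1 + v) / 2) (1 / 2) u := by
        simpa using ((hasDerivAt_id u).const_add 1).div_const 2
      have hB : HasDerivAt (fun v : ℝ => (1 - v) / 2) (-1 / 2) u := by
        simpa using ((hasDerivAt_id u).const_sub 1).div_const 2
      have h1 := (hA.rpow_const (Or.inr hq1.le)).sub (hB.rpow_const (Or.inr hq1.le))
      refine (h1.congr_deriv ?_).hasDerivWithinAt
      simp [hφ']; ring
    · intro u hu
      rw [interior_Icc] at hu
      have hA : HasDerivAt (fun v : ℝ => (1 + v) / 2) (1 / 2) u := by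
        simpa using ((hasDerivAt_id u).const_add 1).div_const 2
      have hB : HasDerivAt (fun v : ℝ => (1 - v) / 2) (-1 / 2) u := by
        simpa using ((hasDerivAt_id u).const_sub 1).div_const 2
      have hApos : (0:ℝ) < (1 + u) / 2 := by linarith [hu.1]
      have hBpos : (0:ℝ) < (1 - u) / 2 := by linarith [hu.2]
      have h1 := ((hA.rpow_const (p := q - 1) (Or.inl hApos.ne')).const_mul (1 / 2 * q)).add
        ((hB.rpow_const (p := q - 1) (Or.inl hBpos.ne')).const_mul (1 / 2 * q))
      refine (h1.congr_deriv ?_).hasDerivWithinAt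
      ring
    · intro u hu
      rw [interior_Icc] at hu
      have hApos : (0:ℝ) < (1 + u) / 2 := by linarith [hu.1]
      have hBpos : (0:ℝ) < (1 - u) / 2 := by linarith [hu.2]
      have hle : ((1 - u) / 2 : ℝ) ≤ (1 + u) / 2 := by linarith [hu.1]
      have h2 : ((1 + u) / 2) ^ (q - 2) ≤ ((1 - u) / 2) ^ (q - 2) :=
        Real.rpow_le_rpow_of_nonpos hBpos hle (by linarith)
      nlinarith [mul_nonneg (show (0:ℝ) ≤ 1 / 2 * q * (1 / 2 * (q - 1)) by nlinarith)
        (sub_nonneg.2 h2)]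
  have h0 : φ 0 = 0 := by simp [hφ]
  have h1 : φ 1 = 1 := by
    simp [hφ, Real.zero_rpow (by positivity : q ≠ 0)]
  have := hconc.2 (x := 0) (y := 1) (by simp) (by simp)
    (by linarith : (0:ℝ) ≤ 1 - s) hs0 (by ring)
  simpa [h0, h1] using this


noncomputable def FF (q t : ℝ) : ℝ :=
  1 - ((1 + Real.sqrt (1 - t)) / 2) ^ q - ((1 - Real.sqrt (1 - t)) / 2) ^ q

lemma contPow' (q : ℝ) (hq : 0 ≤ q) : Continuous (fun z : ℝ => z ^ q) := by
  rw [continuous_iff_continuousAt]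
  exact fun z => Real.continuousAt_rpow_const z q (Or.inr hq)

lemma FF_cont (q : ℝ) (hq : 0 ≤ q) : Continuous (FF q) := by
  unfold FF
  apply Continuous.sub; apply Continuous.sub
  · exact continuous_const
  · exact (contPow' q hq).comp
      ((continuous_const.add (Real.continuous_sqrt.comp (continuous_const.sub continuous_id))).div_const 2)
  · exact (contPow' q hq).comp
      ((continuous_const.sub (Real.continuous_sqrt.comp (continuous_const.sub continuous_id))).div_const 2)

lemma zq_le {z q : ℝ} (h0 : 0 ≤ z) (h1 : z ≤ 1) (hq : 1 ≤ q) : z ^ q ≤ z := by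
  rcases h0.eq_or_lt with h | h
  · simp [← h, Real.zero_rpow (by positivity : q ≠ 0)]
  · calc z ^ q ≤ z ^ (1:ℝ) := Real.rpow_le_rpow_of_exponent_ge h h1 hq
      _ = z := Real.rpow_one z

lemma sqrt_facts {t : ℝ} (ht0 : 0 ≤ t) (ht1 : t ≤ 1) :
    0 ≤ Real.sqrt (1 - t) ∧ Real.sqrt (1 - t) ≤ 1 ∧ Real.sqrt (1 - t) ^ 2 = 1 - t :=
  ⟨Real.sqrt_nonneg _, Real.sqrt_le_one.2 (by linarith), Real.sq_sqrt (by linarith)⟩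

lemma FF_nonneg {q : ℝ} (hq : 1 ≤ q) {t : ℝ} (ht0 : 0 ≤ t) (ht1 : t ≤ 1) : 0 ≤ FF q t := by
  obtain ⟨hs0, hs1, _⟩ := sqrt_facts ht0 ht1
  set s := Real.sqrt (1 - t)
  have h1 : ((1 + s) / 2) ^ q ≤ (1 + s) / 2 := zq_le (by linarith) (by linarith) hq
  have h2 : ((1 - s) / 2) ^ q ≤ (1 - s) / 2 := zq_le (by linarith) (by linarith) hq
  unfold FF; linarith

lemma FF_pos {q : ℝ} (hq : 1 < q) {t : ℝ} (ht0 : 0 < t) (ht1 : t ≤ 1) : 0 < FF q t := by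
  obtain ⟨hs0, hs1, hs2⟩ := sqrt_facts ht0.le ht1
  set s := Real.sqrt (1 - t)
  have hslt : s < 1 := by nlinarith
  have h1 : ((1 + s) / 2) ^ q < (1 + s) / 2 := by
    calc ((1 + s) / 2) ^ q < ((1 + s) / 2) ^ (1:ℝ) :=
      Real.rpow_lt_rpow_of_exponent_gt (by linarith) (by linarith) hq
      _ = (1 + s) / 2 := Real.rpow_one _
  have h2 : ((1 - s) / 2) ^ q < (1 - s) / 2 := by
    calc ((1 - s) / 2) ^ q < ((1 - s) / 2) ^ (1:ℝ) :=
      Real.rpow_lt_rpow_of_exponent_gt (by linarith) (by linarith) hq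
      _ = (1 - s) / 2 := Real.rpow_one _
  unfold FF; linarith

lemma FF_hasDeriv {q : ℝ} (hq : 1 < q) {t : ℝ} (ht0 : 0 < t) (ht1 : t < 1) :
    HasDerivAt (FF q)
      (q * (((1 + Real.sqrt (1 - t)) / 2) ^ (q - 1) - ((1 - Real.sqrt (1 - t)) / 2) ^ (q - 1))
        / (4 * Real.sqrt (1 - t))) t := by
  have h1t : (0:ℝ) < 1 - t := by linarith
  set s := Real.sqrt (1 - t) with hs
  have hs0 : 0 < s := Real.sqrt_pos.2 h1t
  have hinner : HasDerivAt (fun u : ℝ => 1 - u) (-1) t := by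
    simpa using (hasDerivAt_id t).const_sub 1
  have hsq : HasDerivAt (fun u : ℝ => Real.sqrt (1 - u)) (1 / (2 * s) * (-1)) t :=
    (Real.hasDerivAt_sqrt h1t.ne').comp t hinner
  have hA : HasDerivAt (fun u : ℝ => (1 + Real.sqrt (1 - u)) / 2) (1 / (2 * s) * (-1) / 2) t :=
    (hsq.const_add 1).div_const 2
  have hB : HasDerivAt (fun u : ℝ => (1 - Real.sqrt (1 - u)) / 2) (-(1 / (2 * s) * (-1)) / 2) t :=
    (hsq.const_sub 1).div_const 2
  have hAq := hA.rpow_const (p := q) (Or.inr hq.le)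
  have hBq := hB.rpow_const (p := q) (Or.inr hq.le)
  have h := ((hasDerivAt_const t (1:ℝ)).sub hAq).sub hBq
  refine h.congr_deriv ?_
  field_simp
  ring

lemma key_t {q : ℝ} (hq1 : 1 < q) (hq2 : q ≤ 2) {w : ℝ} (hw0 : 0 < w) (hw1 : w < 1) :
    FF q w ≤ q * (((1 + Real.sqrt (1 - w)) / 2) ^ (q - 1)
        - ((1 - Real.sqrt (1 - w)) / 2) ^ (q - 1)) / (4 * Real.sqrt (1 - w)) * (2 / q) * w := by
  have hq0 : (0:ℝ) < q := by linarith
  set s := Real.sqrt (1 - w) with hsdef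
  have hs0 : 0 < s := Real.sqrt_pos.2 (by linarith)
  have hs2 : s ^ 2 = 1 - w := Real.sq_sqrt (by linarith)
  have hs1 : s ≤ 1 := Real.sqrt_le_one.2 (by linarith)
  have hA0 : (0:ℝ) < (1 + s) / 2 := by linarith
  have hB0 : (0:ℝ) < (1 - s) / 2 := by
    have : s < 1 := by nlinarith
    linarith
  have ea : ((1 + s) / 2) ^ q = (1 + s) / 2 * ((1 + s) / 2) ^ (q - 1) := by
    have h := Real.rpow_add hA0 1 (q - 1)
    rw [Real.rpow_one] at h
    have e : 1 + (q - 1) = q := by ring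
    rw [e] at h
    exact h
  have eb : ((1 - s) / 2) ^ q = (1 - s) / 2 * ((1 - s) / 2) ^ (q - 1) := by
    have h := Real.rpow_add hB0 1 (q - 1)
    rw [Real.rpow_one] at h
    have e : 1 + (q - 1) = q := by ring
    rw [e] at h
    exact h
  have key := key_s hq1 hq2 hs0.le hs1
  set A1 := ((1 + s) / 2) ^ (q - 1)
  set B1 := ((1 - s) / 2) ^ (q - 1)
  set Aq := ((1 + s) / 2) ^ q
  set Bq := ((1 - s) / 2) ^ q
  have hFF : FF q w = 1 - Aq - Bq := rfl
  rw [hFF, div_mul_eq_mul_div, div_mul_eq_mul_div, le_div_iff₀ (by positivity)]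
  have hq2' : q * (A1 - B1) * (2 / q) * w = 2 * (A1 - B1) * w := by
    field_simp
  rw [hq2']
  have expand : 2 * (A1 - B1) * w - (1 - Aq - Bq) * (4 * s) = 4 * (Aq - Bq - s) := by
    linear_combination (4 * (s - 1)) * ea + (4 * (s + 1)) * eb + (2 * (A1 - B1)) * hs2
  linarith

lemma G_mono {q : ℝ} (hq1 : 1 < q) (hq2 : q ≤ 2) {u v : ℝ} (hu : 0 < u) (huv : u ≤ v)
    (hv : v ≤ 1) : FF q u ^ (2 / q) / u ≤ FF q v ^ (2 / q) / v := by
  have hq0 : (0:ℝ) < q := by linarith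
  have hasD : ∀ w ∈ Ioo u v, HasDerivAt (fun z => FF q z ^ (2 / q) / z)
      ((q * (((1 + Real.sqrt (1 - w)) / 2) ^ (q - 1) - ((1 - Real.sqrt (1 - w)) / 2) ^ (q - 1))
          / (4 * Real.sqrt (1 - w)) * (2 / q) * FF q w ^ (2 / q - 1) * w
        - FF q w ^ (2 / q) * 1) / w ^ 2) w := by
    intro w hw
    have hw0 : 0 < w := lt_trans hu hw.1
    have hw1 : w < 1 := lt_of_lt_of_le hw.2 hv
    have hFpos : 0 < FF q w := FF_pos hq1 hw0 hw1.le
    have hf := (FF_hasDeriv hq1 hw0 hw1).rpow_const (p := 2 / q) (Or.inl hFpos.ne')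
    exact hf.div (hasDerivAt_id w) hw0.ne'
  have hmono : MonotoneOn (fun z => FF q z ^ (2 / q) / z) (Icc u v) := by
    apply monotoneOn_of_deriv_nonneg (convex_Icc u v)
    · apply ContinuousOn.div
      · exact ((FF_cont q hq0.le).rpow_const fun z => Or.inr (by positivity)).continuousOn
      · exact continuousOn_id
      · intro z hz; exact ne_of_gt (lt_of_lt_of_le hu hz.1)
    · rw [interior_Icc]
      exact fun w hw => ((hasD w hw).differentiableAt).differentiableWithinAt
    · rw [interior_Icc]
      intro w hw
      rw [(hasD w hw).deriv]
      have hw0 : 0 < w := lt_trans hu hw.1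
      have hw1 : w < 1 := lt_of_lt_of_le hw.2 hv
      have hFpos : 0 < FF q w := FF_pos hq1 hw0 hw1.le
      apply div_nonneg _ (by positivity)
      have hsplit : FF q w ^ (2 / q - 1) * FF q w = FF q w ^ (2 / q) := by
        nth_rewrite 2 [← Real.rpow_one (FF q w)]
        rw [← Real.rpow_add hFpos]
        ring_nf
      have hkey := key_t hq1 hq2 hw0 hw1
      have hP : 0 < FF q w ^ (2 / q - 1) := Real.rpow_pos_of_pos hFpos _
      nlinarith [mul_le_mul_of_nonneg_left hkey hP.le, hsplit]
  exact hmono (left_mem_Icc.2 huv) (right_mem_Icc.2 huv) huv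


lemma h_sq_eq {q : ℝ} (hq : 1 < q) {t : ℝ} (ht0 : 0 ≤ t) (ht1 : t ≤ 1) :
    h q t ^ 2 = FF q t ^ (2 / q) := by
  have hF : 0 ≤ FF q t := FF_nonneg hq.le ht0 ht1
  have : h q t = FF q t ^ (1 / q) := rfl
  rw [this, ← Real.rpow_natCast (FF q t ^ (1 / q)) 2, ← Real.rpow_mul hF]
  norm_num
  rw [show q⁻¹ * 2 = 2 / q by ring]

lemma h_zero {q : ℝ} (hq : 1 < q) : h q 0 = 0 := by
  have hq0 : q ≠ 0 := by intro h; rw [h] at hq; linarith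
  have h1q : 1 / q ≠ 0 := by simp [hq0]
  have hq0' : q⁻¹ ≠ 0 := inv_ne_zero hq0
  simp [h, Real.sqrt_one, Real.one_rpow, Real.zero_rpow hq0, Real.zero_rpow hq0']

theorem h_sq_superadditive (q : ℝ) (hq1 : 1 < q) (hq2 : q ≤ 2)
    (x y : ℝ) (hx : 0 ≤ x) (hy : 0 ≤ y) (hxy : x + y ≤ 1) :
    h q (x + y) ^ 2 ≥ h q x ^ 2 + h q y ^ 2 := by
  rcases hx.eq_or_lt with hx0 | hx0
  · rw [← hx0, zero_add, h_zero hq1]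
    norm_num
  rcases hy.eq_or_lt with hy0 | hy0
  · rw [← hy0, add_zero, h_zero hq1]
    norm_num
  have hxy0 : 0 < x + y := by linarith
  have e1 : h q x ^ 2 = FF q x ^ (2 / q) := h_sq_eq hq1 hx (by linarith)
  have e2 : h q y ^ 2 = FF q y ^ (2 / q) := h_sq_eq hq1 hy (by linarith)
  have e3 : h q (x + y) ^ 2 = FF q (x + y) ^ (2 / q) := h_sq_eq hq1 hxy0.le hxy
  rw [e1, e2, e3]
  have g1 := G_mono hq1 hq2 hx0 (by linarith : x ≤ x + y) hxy
  have g2 := G_mono hq1 hq2 hy0 (by linarith : y ≤ x + y) hxy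
  have m1 : FF q x ^ (2 / q) ≤ x * (FF q (x + y) ^ (2 / q) / (x + y)) := by
    have := mul_le_mul_of_nonneg_left g1 hx
    rwa [mul_div_cancel₀ _ hx0.ne'] at this
  have m2 : FF q y ^ (2 / q) ≤ y * (FF q (x + y) ^ (2 / q) / (x + y)) := by
    have := mul_le_mul_of_nonneg_left g2 hy
    rwa [mul_div_cancel₀ _ hy0.ne'] at this
  have m3 : x * (FF q (x + y) ^ (2 / q) / (x + y)) + y * (FF q (x + y) ^ (2 / q) / (x + y))
      = FF q (x + y) ^ (2 / q) := by
    field_simp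
  linarith
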